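/- Let G be a finite simple graph with n = |V(G)| vertices and adjacency matrix A over 𝔽₂, and define ψ(G) = 2^{-2n} · Σ_{U ⊆ V(G)} (-1/2)^{n-|U|} · 2^{corank(A(G|_U))}. Then ψ(G) = 2^{-3n} · Σ_x (-1)^{|supp(A·x)|} · 2^{|supp(x)|}, where the sum is over all vectors x ∈ 𝔽₂^{V(G)} satisfying supp(x) ⊆ S(x), with supp(x) = { i ∈ V(G) : x_i = 1 } and S(x) = { i ∈ V(G) : (A·x)_i = 0 }. -/

import Mathlib

open Finset

/-- The adjacency matrix over `𝔽₂` of the subgraph of `G` induced by the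
vertex subset `U`. -/
def adjMatrixOn {V : Type*} [Fintype V] [DecidableEq V] (G : SimpleGraph V)
    [DecidableRel G.Adj] (U : Finset V) : Matrix U U (ZMod 2) :=
  Matrix.of fun i j => if G.Adj (i : V) (j : V) then 1 else 0

/-- The corank over `𝔽₂` of a square matrix over `𝔽₂`, i.e. the dimension
of its kernel. -/
noncomputable def corank {m : Type*} [Fintype m] [DecidableEq m]
    (M : Matrix m m (ZMod 2)) : ℕ :=
  Module.finrank (ZMod 2) (LinearMap.ker M.mulVecLin)

/-- The support of a vector over `𝔽₂`: the set of coordinates equal to `1`. -/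
def supp {V : Type*} [Fintype V] [DecidableEq V] (x : V → ZMod 2) : Finset V :=
  Finset.univ.filter (fun i => x i = 1)

lemma zmod2_dichotomy (a : ZMod 2) : a = 0 ∨ a = 1 := by revert a; decide

lemma zmod2_one_iff (a : ZMod 2) : a = 1 ↔ ¬ a = 0 := by revert a; decide

section Aux

variable {V : Type*} [Fintype V] [DecidableEq V] (G : SimpleGraph V) [DecidableRel G.Adj]

lemma mulVec_restrict (U : Finset V) (x : V → ZMod 2)
    (hx : ∀ v ∉ U, x v = 0) (i : V) (hi : i ∈ U) :
    (G.adjMatrix (ZMod 2)).mulVec x i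
      = (adjMatrixOn G U).mulVec (fun u => x u) ⟨i, hi⟩ := by
  simp only [Matrix.mulVec, dotProduct, SimpleGraph.adjMatrix_apply,
    adjMatrixOn, Matrix.of_apply]
  rw [Finset.sum_coe_sort U (fun v => (if G.Adj i v then (1 : ZMod 2) else 0) * x v)]
  exact (Finset.sum_subset U.subset_univ fun v _ hv => by rw [hx v hv, mul_zero]).symm

/-- The kernel of the induced adjacency matrix is equivalent to the set of vectors
supported in `U` whose image under the full adjacency matrix vanishes on `U`. -/
def kerEquiv (U : Finset V) :
    LinearMap.ker (adjMatrixOn G U).mulVecLin ≃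
      {x : V → ZMod 2 // supp x ⊆ U ∧ ∀ i ∈ U, (G.adjMatrix (ZMod 2)).mulVec x i = 0} where
  toFun y := ⟨fun v => if h : v ∈ U then y.1 ⟨v, h⟩ else 0, by
    constructor
    · intro v hv
      simp only [supp, Finset.mem_filter] at hv
      by_contra h
      rw [dif_neg h] at hv
      exact zero_ne_one hv.2
    · intro i hi
      rw [mulVec_restrict G U _ (fun v hv => dif_neg hv) i hi]
      have : (fun u : U => if h : (u : V) ∈ U then y.1 ⟨u, h⟩ else 0) = y.1 := by
        funext u; rw [dif_pos u.2]
      rw [this]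
      have hy := y.2
      rw [LinearMap.mem_ker] at hy
      rw [Matrix.mulVecLin_apply] at hy
      exact congrFun hy ⟨i, hi⟩⟩
  invFun x := ⟨fun u => x.1 u, by
    rw [LinearMap.mem_ker]
    funext i
    have hx0 : ∀ v ∉ U, x.1 v = 0 := by
      intro v hv
      rcases zmod2_dichotomy (x.1 v) with h | h
      · exact h
      · exact absurd (x.2.1 (by simp [supp, h])) hv
    have := (mulVec_restrict G U x.1 hx0 i i.2).symm
    rw [Matrix.mulVecLin_apply]
    calc ((adjMatrixOn G U).mulVec fun u => x.1 u) i
        = (adjMatrixOn G U).mulVec (fun u => x.1 u) ⟨(i : V), i.2⟩ := rfl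
      _ = (G.adjMatrix (ZMod 2)).mulVec x.1 i := this
      _ = 0 := x.2.2 i i.2⟩
  left_inv y := by
    apply Subtype.ext
    funext u
    exact dif_pos u.2
  right_inv x := by
    apply Subtype.ext
    funext v
    by_cases h : v ∈ U
    · exact dif_pos h
    · refine (dif_neg h).trans ?_
      symm
      rcases zmod2_dichotomy (x.1 v) with h' | h'
      · exact h'
      · exact absurd (x.2.1 (by simp [supp, h'])) h

lemma card_ker_eq (U : Finset V) :
    ((univ : Finset (V → ZMod 2)).filter
        (fun x => supp x ⊆ U ∧ ∀ i ∈ U, (G.adjMatrix (ZMod 2)).mulVec x i = 0)).card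
      = 2 ^ corank (adjMatrixOn G U) := by
  haveI : Fintype ↥(LinearMap.ker (adjMatrixOn G U).mulVecLin) := Fintype.ofFinite _
  rw [← Fintype.card_subtype]
  rw [← Fintype.card_congr (kerEquiv G U)]
  rw [Module.card_eq_pow_finrank (K := ZMod 2), ZMod.card]
  rfl

lemma sum_pow_card (D : Finset V) (a : ℚ) :
    ∑ T ∈ D.powerset, a ^ T.card = (a + 1) ^ D.card := by
  symm
  rw [← Finset.prod_const, Finset.prod_add]
  exact Finset.sum_congr rfl fun T hT => by simp [Finset.prod_const]

end Aux

theorem psi_eq_vector_sum {V : Type*} [Fintype V] [DecidableEq V]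
    (G : SimpleGraph V) [DecidableRel G.Adj] :
    (2 : ℚ) ^ (-(2 * (Fintype.card V : ℤ))) *
      ∑ U ∈ (Finset.univ : Finset V).powerset,
        (-(1 : ℚ) / 2) ^ (Fintype.card V - U.card) *
          (2 : ℚ) ^ corank (adjMatrixOn G U)
    =
    (2 : ℚ) ^ (-(3 * (Fintype.card V : ℤ))) *
      ∑ x ∈ (Finset.univ : Finset (V → ZMod 2)).filter
          (fun x => ∀ i : V, x i = 1 → (G.adjMatrix (ZMod 2)).mulVec x i = 0),
        (-1 : ℚ) ^ (supp ((G.adjMatrix (ZMod 2)).mulVec x)).card *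
          (2 : ℚ) ^ (supp x).card := by
  classical
  set A := G.adjMatrix (ZMod 2) with hA
  set n := Fintype.card V with hn
  set Sx : (V → ZMod 2) → Finset V :=
    fun x => (univ : Finset V).filter (fun i => A.mulVec x i = 0) with hSx
  have hUSx : ∀ (x : V → ZMod 2) (U : Finset V),
      (∀ i ∈ U, A.mulVec x i = 0) ↔ U ⊆ Sx x := fun x U =>
    ⟨fun h i hi => Finset.mem_filter.mpr ⟨Finset.mem_univ i, h i hi⟩,
     fun h i hi => (Finset.mem_filter.mp (h hi)).2⟩
  -- Step 1: express each summand of the LHS as a sum over vectors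
  have hstep1 : ∀ U ∈ (univ : Finset V).powerset,
      (-(1:ℚ)/2) ^ (n - U.card) * (2:ℚ) ^ corank (adjMatrixOn G U)
      = ∑ x : V → ZMod 2,
          (if supp x ⊆ U ∧ ∀ i ∈ U, A.mulVec x i = 0
            then (-(1:ℚ)/2)^n * (-2:ℚ)^U.card else 0) := by
    intro U hU
    have hcard : ((2:ℚ)) ^ corank (adjMatrixOn G U)
        = (((univ : Finset (V → ZMod 2)).filter
            (fun x => supp x ⊆ U ∧ ∀ i ∈ U, A.mulVec x i = 0)).card : ℚ) := by
      rw [card_ker_eq G U]; push_cast; ring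
    have hpow : (-(1:ℚ)/2) ^ (n - U.card) = (-(1:ℚ)/2)^n * (-2:ℚ)^U.card := by
      rw [pow_sub₀ _ (by norm_num) (by rw [hn]; exact Finset.card_le_univ U)]
      congr 1
      rw [← inv_pow]
      norm_num
    rw [hcard, Finset.card_filter, hpow]
    push_cast
    rw [Finset.mul_sum]
    exact Finset.sum_congr rfl fun x _ => by
      rw [mul_ite, mul_one, mul_zero]
  rw [Finset.sum_congr rfl hstep1, Finset.sum_comm]
  -- Step 2: evaluate the inner sum over `U` for each fixed vector `x`
  have hstep2 : ∀ x : V → ZMod 2,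
      (∑ U ∈ (univ : Finset V).powerset,
        if supp x ⊆ U ∧ ∀ i ∈ U, A.mulVec x i = 0
          then (-(1:ℚ)/2)^n * (-2:ℚ)^U.card else 0)
      = if ∀ i, x i = 1 → A.mulVec x i = 0
          then (-(1:ℚ)/2)^n * ((-2:ℚ)^(supp x).card * (-1:ℚ)^((Sx x) \ supp x).card)
          else 0 := by
    intro x
    by_cases hx : ∀ i, x i = 1 → A.mulVec x i = 0
    · rw [if_pos hx]
      have hsub : supp x ⊆ Sx x := fun i hi => by
        simp only [supp, Finset.mem_filter] at hi
        exact Finset.mem_filter.mpr ⟨Finset.mem_univ i, hx i hi.2⟩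
      rw [← Finset.sum_filter]
      rw [Finset.sum_nbij' (i := fun U => U \ supp x) (j := fun T => supp x ∪ T)
        (t := (Sx x \ supp x).powerset)
        (g := fun T => (-(1:ℚ)/2)^n * ((-2:ℚ)^(supp x).card * (-2:ℚ)^T.card))
        (fun U hU => by
          simp only [Finset.mem_filter, Finset.mem_powerset] at hU
          exact Finset.mem_powerset.mpr
            (Finset.sdiff_subset_sdiff ((hUSx x U).mp hU.2.2) (le_refl _)))
        (fun T hT => by
          rw [Finset.mem_powerset] at hT
          refine Finset.mem_filter.mpr ⟨Finset.mem_powerset.mpr (Finset.subset_univ _),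
            Finset.subset_union_left, (hUSx x _).mpr ?_⟩
          exact Finset.union_subset hsub (hT.trans (Finset.sdiff_subset)))
        (fun U hU => by
          simp only [Finset.mem_filter] at hU
          exact Finset.union_sdiff_of_subset hU.2.1)
        (fun T hT => by
          rw [Finset.mem_powerset] at hT
          exact Finset.union_sdiff_cancel_left
            (Finset.disjoint_of_subset_right hT Finset.disjoint_sdiff))
        (fun U hU => by
          simp only [Finset.mem_filter] at hU
          have h1 : (supp x).card ≤ U.card := Finset.card_le_card hU.2.1
          have h2 : (U \ supp x).card = U.card - (supp x).card :=
            Finset.card_sdiff_of_subset hU.2.1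
          show (-(1:ℚ)/2)^n * (-2:ℚ)^U.card
              = (-(1:ℚ)/2)^n * ((-2:ℚ)^(supp x).card * (-2:ℚ)^(U \ supp x).card)
          rw [← pow_add]
          congr 2
          omega)]
      rw [← Finset.mul_sum, ← Finset.mul_sum, sum_pow_card]
      norm_num
    · rw [if_neg hx]
      apply Finset.sum_eq_zero
      intro U hU
      rw [if_neg]
      rintro ⟨h1, h2⟩
      push_neg at hx
      obtain ⟨i, hxi, hne⟩ := hx
      exact hne (h2 i (h1 (Finset.mem_filter.mpr ⟨Finset.mem_univ i, hxi⟩)))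
  rw [Finset.sum_congr rfl (fun x _ => hstep2 x), ← Finset.sum_filter]
  -- Step 3: compare termwise
  rw [Finset.mul_sum, Finset.mul_sum]
  refine Finset.sum_congr rfl fun x hx => ?_
  rw [Finset.mem_filter] at hx
  have hsub : supp x ⊆ Sx x := fun i hi => by
    simp only [supp, Finset.mem_filter] at hi
    exact Finset.mem_filter.mpr ⟨Finset.mem_univ i, hx.2 i hi.2⟩
  set s := (supp x).card
  set d := ((Sx x) \ supp x).card
  set m := (supp (A.mulVec x)).card with hm
  have hAx : supp (A.mulVec x) = univ \ Sx x := by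
    ext i
    simp only [supp, hSx, Finset.mem_filter, Finset.mem_sdiff, Finset.mem_univ, true_and]
    rw [zmod2_one_iff]
  have hcard1 : m + (Sx x).card = n := by
    have hle : (Sx x).card ≤ Fintype.card V := Finset.card_le_univ (Sx x)
    rw [hm, hAx, Finset.card_sdiff_of_subset (Finset.subset_univ _), Finset.card_univ, hn]
    omega
  have hcard2 : (Sx x).card = s + d := by
    have h2 : d = (Sx x).card - s := Finset.card_sdiff_of_subset hsub
    have := Finset.card_le_card hsub
    omega
  have hnval : n = m + s + d := by omega
  have hsign : ((-1:ℚ))^n = (-1:ℚ)^m * (-1:ℚ)^s * (-1:ℚ)^d := by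
    rw [← pow_add, ← pow_add, hnval]
  have e1 : (-(1:ℚ)/2) ^ n = (-1:ℚ)^n * ((2:ℚ)^n)⁻¹ := by
    rw [div_pow, div_eq_mul_inv]
  have e2 : (-2:ℚ)^s = (-1:ℚ)^s * 2^s := by
    rw [show (-2:ℚ) = -1 * 2 by norm_num, mul_pow]
  have e3 : (2:ℚ)^(-(2*(n:ℤ))) = ((2:ℚ)^(2*n))⁻¹ := by
    rw [show -(2*(n:ℤ)) = -((2*n : ℕ) : ℤ) by push_cast; ring, zpow_neg, zpow_natCast]
  have e4 : (2:ℚ)^(-(3*(n:ℤ))) = ((2:ℚ)^(2*n) * (2:ℚ)^n)⁻¹ := by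
    rw [show -(3*(n:ℤ)) = -((3*n : ℕ) : ℤ) by push_cast; ring, zpow_neg, zpow_natCast,
      show 3*n = 2*n + n by ring, pow_add]
  rw [e1, e2, e3, e4, hsign]
  have h2n : ((2:ℚ)^(2*n)) ≠ 0 := by positivity
  have hnn : ((2:ℚ)^n) ≠ 0 := by positivity
  field_simp
  have h1 : ((-1:ℚ))^s * (-1)^s = 1 := by rw [← mul_pow]; norm_num
  have h2 : ((-1:ℚ))^d * (-1)^d = 1 := by rw [← mul_pow]; norm_num
  rw [sq, sq, h1, h2, one_mul]
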